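/- For positive reals a, b, the complete elliptic-type integral ∫₀^{π/2} dφ / √(a² cos²φ + b² sin²φ) equals π / (2 M(a,b)), where M(a,b) is the arithmetic–geometric mean of a and b. -/

import Mathlib

open Filter Topology Real Set MeasureTheory

noncomputable def ellI (a b : ℝ) : ℝ :=
  ∫ φ in (0:ℝ)..(π / 2), (Real.sqrt (a ^ 2 * Real.cos φ ^ 2 + b ^ 2 * Real.sin φ ^ 2))⁻¹

noncomputable def ellJ (a b : ℝ) : ℝ :=
  ∫ x in Ioi (0:ℝ), (Real.sqrt ((x ^ 2 + a ^ 2) * (x ^ 2 + b ^ 2)))⁻¹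

lemma ellI_eq_ellJ {a b : ℝ} (ha : 0 < a) (hb : 0 < b) : ellI a b = ellJ a b := by
  have himg : (fun φ => b * tan φ) '' Ioo 0 (π / 2) = Ioi (0:ℝ) := by
    ext y
    constructor
    · rintro ⟨φ, hφ, rfl⟩
      exact mul_pos hb (tan_pos_of_pos_of_lt_pi_div_two hφ.1 hφ.2)
    · intro hy
      refine ⟨arctan (y / b), ⟨?_, arctan_lt_pi_div_two _⟩, ?_⟩
      · rw [← arctan_zero]
        exact arctan_strictMono (div_pos hy hb)
      · show b * tan (arctan (y / b)) = y
        rw [tan_arctan]; field_simp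
  have hderiv : ∀ φ ∈ Ioo 0 (π / 2),
      HasDerivWithinAt (fun φ => b * tan φ) (b / cos φ ^ 2) (Ioo 0 (π / 2)) φ := by
    intro φ hφ
    have hc : 0 < cos φ := cos_pos_of_mem_Ioo ⟨by linarith [hφ.1, pi_div_two_pos], hφ.2⟩
    have := (Real.hasDerivAt_tan hc.ne').const_mul b
    simpa [div_eq_mul_inv, mul_one_div] using this.hasDerivWithinAt
  have hinj : InjOn (fun φ => b * tan φ) (Ioo 0 (π / 2)) := by
    intro x hx y hy h
    refine Real.injOn_tan ⟨by linarith [hx.1, pi_div_two_pos], hx.2⟩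
      ⟨by linarith [hy.1, pi_div_two_pos], hy.2⟩ (mul_left_cancel₀ hb.ne' h)
  have key := integral_image_eq_integral_abs_deriv_smul (f' := fun φ => b / cos φ ^ 2)
    measurableSet_Ioo hderiv hinj
    (fun x => (Real.sqrt ((x ^ 2 + a ^ 2) * (x ^ 2 + b ^ 2)))⁻¹)
  rw [himg] at key
  rw [ellI, ellJ, key, intervalIntegral.integral_of_le (by positivity),
    integral_Ioc_eq_integral_Ioo]
  apply setIntegral_congr_fun measurableSet_Ioo
  intro φ hφ
  have hc : 0 < cos φ := cos_pos_of_mem_Ioo ⟨by linarith [hφ.1, pi_div_two_pos], hφ.2⟩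
  have hs : 0 < sin φ := sin_pos_of_pos_of_lt_pi hφ.1 (by linarith [hφ.2, pi_pos])
  have hX : 0 < a ^ 2 * cos φ ^ 2 + b ^ 2 * sin φ ^ 2 := by positivity
  have h1 : ((b * tan φ) ^ 2 + a ^ 2) * ((b * tan φ) ^ 2 + b ^ 2)
      = (a ^ 2 * cos φ ^ 2 + b ^ 2 * sin φ ^ 2) * (b / cos φ ^ 2) ^ 2 := by
    rw [Real.tan_eq_sin_div_cos]
    field_simp
    linear_combination (a ^ 2 * cos φ ^ 2 + b ^ 2 * sin φ ^ 2) *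
      (Real.sin_sq_add_cos_sq φ)
  have hfp : 0 < b / cos φ ^ 2 := by positivity
  simp only [smul_eq_mul]
  rw [h1, Real.sqrt_mul hX.le, Real.sqrt_sq hfp.le, abs_of_pos hfp, mul_inv]
  have hXs : 0 < Real.sqrt (a ^ 2 * cos φ ^ 2 + b ^ 2 * sin φ ^ 2) := Real.sqrt_pos.2 hX
  field_simp

lemma ellJ_step {a b : ℝ} (ha : 0 < a) (hb : 0 < b) :
    ellJ ((a + b) / 2) (Real.sqrt (a * b)) = ellJ a b := by
  set f : ℝ → ℝ := fun t => (t - a * b / t) / 2 with hf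
  set f' : ℝ → ℝ := fun t => (1 + a * b / t ^ 2) / 2 with hf'
  have himg : f '' Ioi 0 = univ := by
    refine eq_univ_of_forall fun u => ?_
    have hur : 0 ≤ u ^ 2 + a * b := by positivity
    have htpos : 0 < u + Real.sqrt (u ^ 2 + a * b) := by
      have h1 : |u| < Real.sqrt (u ^ 2 + a * b) := by
        rw [← Real.sqrt_sq_eq_abs]
        exact Real.sqrt_lt_sqrt (sq_nonneg u) (by nlinarith [mul_pos ha hb])
      cases abs_lt.1 h1 with
      | intro h2 h3 => linarith
    refine ⟨u + Real.sqrt (u ^ 2 + a * b), htpos, ?_⟩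
    have hsq : Real.sqrt (u ^ 2 + a * b) ^ 2 = u ^ 2 + a * b := Real.sq_sqrt hur
    show (_ - a * b / _) / 2 = u
    field_simp [htpos.ne']
    nlinarith [hsq]
  have hderiv : ∀ t ∈ Ioi (0:ℝ), HasDerivWithinAt f (f' t) (Ioi 0) t := by
    intro t ht
    have ht0 : (t:ℝ) ≠ 0 := (mem_Ioi.1 ht).ne'
    have : HasDerivAt f ((1 - (a * b) * (-1 / t ^ 2)) / 2) t := by
      have h1 : HasDerivAt (fun t : ℝ => a * b / t) (a * b * (-1 / t ^ 2)) t := by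
        simpa [div_eq_mul_inv, mul_comm, mul_assoc] using
          ((hasDerivAt_inv ht0).const_mul (a * b))
      exact ((hasDerivAt_id t).sub h1).div_const 2
    have e : f' t = (1 - (a * b) * (-1 / t ^ 2)) / 2 := by
      show (1 + a * b / t ^ 2) / 2 = _
      ring
    rw [e]
    exact this.hasDerivWithinAt
  have hinj : InjOn f (Ioi 0) := by
    intro x hx y hy h
    have hx0 : (0:ℝ) < x := hx
    have hy0 : (0:ℝ) < y := hy
    have : (x - a * b / x) / 2 = (y - a * b / y) / 2 := h
    have h2 : (x - y) * (x * y + a * b) = 0 := by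
      field_simp at this
      nlinarith [this]
    have h3 : x * y + a * b > 0 := by positivity
    have := mul_eq_zero.1 h2
    rcases this with h4 | h4
    · linarith
    · exact absurd h4 h3.ne'
  have key := integral_image_eq_integral_abs_deriv_smul (f' := f')
    measurableSet_Ioi hderiv hinj
    (fun x => (Real.sqrt ((x ^ 2 + ((a+b)/2) ^ 2) * (x ^ 2 + Real.sqrt (a*b) ^ 2)))⁻¹)
  rw [himg] at key
  have hev : ∫ x, (Real.sqrt ((x ^ 2 + ((a+b)/2) ^ 2) * (x ^ 2 + Real.sqrt (a*b) ^ 2)))⁻¹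
      = 2 * ellJ ((a+b)/2) (Real.sqrt (a*b)) := by
    rw [ellJ, ← integral_comp_abs (f := fun x =>
      (Real.sqrt ((x ^ 2 + ((a+b)/2) ^ 2) * (x ^ 2 + Real.sqrt (a*b) ^ 2)))⁻¹)]
    congr 1
    ext x
    rw [sq_abs]
  rw [setIntegral_univ, hev] at key
  have hrhs : ∫ t in Ioi (0:ℝ), |f' t| •
      (Real.sqrt ((f t ^ 2 + ((a+b)/2) ^ 2) * (f t ^ 2 + Real.sqrt (a*b) ^ 2)))⁻¹
      = 2 * ellJ a b := by
    rw [ellJ, ← integral_const_mul]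
    refine setIntegral_congr_fun measurableSet_Ioi ?_
    intro t ht
    have ht0 : (0:ℝ) < t := ht
    have hab : Real.sqrt (a*b) ^ 2 = a * b := Real.sq_sqrt (by positivity)
    have hfp : 0 < f' t := by
      have : 0 < a * b / t ^ 2 := by positivity
      simp only [hf']
      linarith
    have h1 : (f t ^ 2 + ((a+b)/2) ^ 2) * (f t ^ 2 + Real.sqrt (a*b) ^ 2)
        = ((t ^ 2 + a ^ 2) * (t ^ 2 + b ^ 2)) * ((t ^ 2 + a * b) / (4 * t ^ 2)) ^ 2 := by
      rw [hab]
      simp only [hf]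
      field_simp
      ring
    have hX : (0:ℝ) ≤ (t ^ 2 + a ^ 2) * (t ^ 2 + b ^ 2) := by positivity
    have hcp : 0 < (t ^ 2 + a * b) / (4 * t ^ 2) := by positivity
    simp only [smul_eq_mul]
    rw [h1, Real.sqrt_mul hX, Real.sqrt_sq hcp.le, abs_of_pos hfp, mul_inv]
    have hXs : 0 < Real.sqrt ((t ^ 2 + a ^ 2) * (t ^ 2 + b ^ 2)) :=
      Real.sqrt_pos.2 (by positivity)
    simp only [hf']
    field_simp
    ring
  rw [hrhs] at key
  linarith [key]

lemma ellI_bounds {a b l u : ℝ} (hl : 0 < l) (hla : l ≤ a) (hlb : l ≤ b)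
    (hau : a ≤ u) (hbu : b ≤ u) :
    π / 2 * u⁻¹ ≤ ellI a b ∧ ellI a b ≤ π / 2 * l⁻¹ := by
  have hu : 0 < u := lt_of_lt_of_le hl (hla.trans hau)
  have hpos : ∀ φ : ℝ, l ^ 2 ≤ a ^ 2 * cos φ ^ 2 + b ^ 2 * sin φ ^ 2 := by
    intro φ
    nlinarith [sin_sq_add_cos_sq φ, sq_nonneg (cos φ), sq_nonneg (sin φ),
      mul_nonneg (show (0:ℝ) ≤ a ^ 2 - l ^ 2 by nlinarith) (sq_nonneg (cos φ)),
      mul_nonneg (show (0:ℝ) ≤ b ^ 2 - l ^ 2 by nlinarith) (sq_nonneg (sin φ))]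
  have hupp : ∀ φ : ℝ, a ^ 2 * cos φ ^ 2 + b ^ 2 * sin φ ^ 2 ≤ u ^ 2 := by
    intro φ
    nlinarith [sin_sq_add_cos_sq φ, sq_nonneg (cos φ), sq_nonneg (sin φ),
      mul_nonneg (show (0:ℝ) ≤ u ^ 2 - a ^ 2 by nlinarith) (sq_nonneg (cos φ)),
      mul_nonneg (show (0:ℝ) ≤ u ^ 2 - b ^ 2 by nlinarith) (sq_nonneg (sin φ))]
  have hX : ∀ φ : ℝ, 0 < a ^ 2 * cos φ ^ 2 + b ^ 2 * sin φ ^ 2 :=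
    fun φ => lt_of_lt_of_le (by positivity) (hpos φ)
  have hcont : Continuous fun φ : ℝ =>
      (Real.sqrt (a ^ 2 * cos φ ^ 2 + b ^ 2 * sin φ ^ 2))⁻¹ := by
    refine Continuous.inv₀ (Real.continuous_sqrt.comp (by continuity)) ?_
    exact fun φ => (Real.sqrt_pos.2 (hX φ)).ne'
  have hint : IntervalIntegrable (fun φ : ℝ =>
      (Real.sqrt (a ^ 2 * cos φ ^ 2 + b ^ 2 * sin φ ^ 2))⁻¹) volume 0 (π/2) :=
    hcont.intervalIntegrable _ _
  have hle : ∀ φ : ℝ, u⁻¹ ≤ (Real.sqrt (a ^ 2 * cos φ ^ 2 + b ^ 2 * sin φ ^ 2))⁻¹ := by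
    intro φ
    have h1 : Real.sqrt (a ^ 2 * cos φ ^ 2 + b ^ 2 * sin φ ^ 2) ≤ u := by
      rw [show u = Real.sqrt (u ^ 2) from (Real.sqrt_sq hu.le).symm]
      exact Real.sqrt_le_sqrt (hupp φ)
    exact inv_anti₀ (Real.sqrt_pos.2 (hX φ)) h1
  have hge : ∀ φ : ℝ, (Real.sqrt (a ^ 2 * cos φ ^ 2 + b ^ 2 * sin φ ^ 2))⁻¹ ≤ l⁻¹ := by
    intro φ
    have h1 : l ≤ Real.sqrt (a ^ 2 * cos φ ^ 2 + b ^ 2 * sin φ ^ 2) := by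
      rw [show l = Real.sqrt (l ^ 2) from (Real.sqrt_sq hl.le).symm]
      exact Real.sqrt_le_sqrt (hpos φ)
    exact inv_anti₀ hl h1
  have hp2 : (0:ℝ) ≤ π / 2 := by positivity
  constructor
  · have := intervalIntegral.integral_mono_on hp2
      (intervalIntegrable_const (c := u⁻¹)) hint (fun φ _ => hle φ)
    simpa [mul_comm, ellI] using this
  · have := intervalIntegral.integral_mono_on hp2 hint
      (intervalIntegrable_const (c := l⁻¹)) (fun φ _ => hge φ)
    simpa [mul_comm, ellI] using this

theorem gauss_agm_elliptic_integral (a b : ℝ) (ha : 0 < a) (hb : 0 < b)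
    (A B : ℕ → ℝ) (hA0 : A 0 = a) (hB0 : B 0 = b)
    (hA : ∀ n, A (n + 1) = (A n + B n) / 2)
    (hB : ∀ n, B (n + 1) = Real.sqrt (A n * B n))
    (M : ℝ) (hMA : Tendsto A atTop (𝓝 M)) (hMB : Tendsto B atTop (𝓝 M)) :
    ∫ φ in (0:ℝ)..(π / 2),
        1 / Real.sqrt (a ^ 2 * Real.cos φ ^ 2 + b ^ 2 * Real.sin φ ^ 2)
      = π / (2 * M) := by
  have hpos : ∀ n, 0 < A n ∧ 0 < B n := by
    intro n
    induction n with
    | zero => exact ⟨hA0 ▸ ha, hB0 ▸ hb⟩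
    | succ n ih =>
      refine ⟨?_, ?_⟩
      · rw [hA]; linarith [ih.1, ih.2]
      · rw [hB]; exact Real.sqrt_pos.2 (mul_pos ih.1 ih.2)
  -- B is monotone from index 1 onwards; more precisely B (n+1) ≤ min at later stages
  have hBA : ∀ n, B (n + 1) ≤ A (n + 1) := by
    intro n
    rw [hA, hB]
    have h1 : A n * B n ≤ ((A n + B n) / 2) ^ 2 := by nlinarith [sq_nonneg (A n - B n)]
    have := Real.sqrt_le_sqrt h1
    rwa [Real.sqrt_sq (by linarith [(hpos n).1, (hpos n).2])] at this
  have hBmono : ∀ n, B (n + 1) ≤ B (n + 2) := by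
    intro n
    have h1 : B (n + 1) ^ 2 ≤ A (n + 1) * B (n + 1) := by
      nlinarith [(hpos (n+1)).2, hBA n]
    have h2 := Real.sqrt_le_sqrt h1
    rw [Real.sqrt_sq (hpos (n+1)).2.le] at h2
    calc B (n + 1) ≤ Real.sqrt (A (n + 1) * B (n + 1)) := h2
      _ = B (n + 2) := (hB (n + 1)).symm
  have hB1le : ∀ n, B 1 ≤ B (n + 1) := by
    intro n
    induction n with
    | zero => exact le_refl _
    | succ n ih => exact ih.trans (hBmono n)
  have hM : 0 < M := by
    have h1 : B 1 ≤ M := by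
      refine ge_of_tendsto hMB ?_
      filter_upwards [eventually_ge_atTop 1] with n hn
      obtain ⟨m, rfl⟩ := Nat.exists_eq_add_of_le hn
      simpa [add_comm] using hB1le m
    have h2 : 0 < B 1 := (hpos 1).2
    linarith
  have hInv : ∀ n, ellI (A n) (B n) = ellI a b := by
    intro n
    induction n with
    | zero => rw [hA0, hB0]
    | succ n ih =>
      rw [hA, hB, ← ih]
      have h1 := (hpos n).1
      have h2 := (hpos n).2
      rw [ellI_eq_ellJ (by linarith) (Real.sqrt_pos.2 (mul_pos h1 h2)),
        ellJ_step h1 h2, ← ellI_eq_ellJ h1 h2]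
  have hbnd : ∀ n, π / 2 * (max (A n) (B n))⁻¹ ≤ ellI a b ∧
      ellI a b ≤ π / 2 * (min (A n) (B n))⁻¹ := by
    intro n
    have h1 := (hpos n).1
    have h2 := (hpos n).2
    have := ellI_bounds (lt_min h1 h2) (min_le_left _ _) (min_le_right _ _)
      (le_max_left (A n) (B n)) (le_max_right (A n) (B n))
    rwa [hInv n] at this
  have htmin : Tendsto (fun n => π / 2 * (min (A n) (B n))⁻¹) atTop (𝓝 (π / 2 * M⁻¹)) := by
    have : Tendsto (fun n => min (A n) (B n)) atTop (𝓝 (min M M)) := hMA.min hMB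
    rw [min_self] at this
    exact (this.inv₀ hM.ne').const_mul _
  have htmax : Tendsto (fun n => π / 2 * (max (A n) (B n))⁻¹) atTop (𝓝 (π / 2 * M⁻¹)) := by
    have : Tendsto (fun n => max (A n) (B n)) atTop (𝓝 (max M M)) := hMA.max hMB
    rw [max_self] at this
    exact (this.inv₀ hM.ne').const_mul _
  have hfinal : ellI a b = π / 2 * M⁻¹ := by
    refine le_antisymm ?_ ?_
    · exact ge_of_tendsto' htmin fun n => (hbnd n).2
    · exact le_of_tendsto' htmax fun n => (hbnd n).1
  simp only [one_div]
  show ellI a b = π / (2 * M)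
  rw [hfinal]; ring
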